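/- Let q₀ ~ N(0, σ²), let (δt_k) be i.i.d. Exp(1/λ) random variables and (ξ_k) i.i.d. N(0,1), all independent, and define recursively q_{n+1} = cos(δt_n/σ)·q_n + σ·sin(δt_n/σ)·ξ_n. Then for every j ≥ 0, Cov(q₀, q_j) = σ²·(σ²/(σ² + λ²))^j. -/

import Mathlib

open MeasureTheory ProbabilityTheory Real Set Filter
open scoped NNReal ENNReal Topology

section Aux

/-- Integral against the Gaussian measure as a density integral. -/
lemma aux_gaussian_int_eq (v : ℝ≥0) (hv : v ≠ 0) (g : ℝ → ℝ) :
    ∫ x, g x ∂(gaussianReal 0 v) = ∫ x, gaussianPDFReal 0 v x * g x := by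
  rw [gaussianReal_of_var_ne_zero _ hv, gaussianPDF_def]
  have : (fun x => ENNReal.ofReal (gaussianPDFReal 0 v x))
      = (fun x => ((Real.toNNReal (gaussianPDFReal 0 v x) : ℝ≥0) : ℝ≥0∞)) := rfl
  rw [this, integral_withDensity_eq_integral_smul
    ((measurable_gaussianPDFReal 0 v).real_toNNReal) g]
  congr 1; ext x
  rw [NNReal.smul_def, smul_eq_mul, Real.coe_toNNReal _ (gaussianPDFReal_nonneg 0 v x)]

lemma aux_gaussian_integrable_iff (v : ℝ≥0) (hv : v ≠ 0) (g : ℝ → ℝ) :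
    Integrable g (gaussianReal 0 v) ↔ Integrable (fun x => gaussianPDFReal 0 v x * g x) := by
  rw [gaussianReal_of_var_ne_zero _ hv, gaussianPDF_def]
  have : (fun x => ENNReal.ofReal (gaussianPDFReal 0 v x))
      = (fun x => ((Real.toNNReal (gaussianPDFReal 0 v x) : ℝ≥0) : ℝ≥0∞)) := rfl
  rw [this, integrable_withDensity_iff_integrable_smul
    ((measurable_gaussianPDFReal 0 v).real_toNNReal)]
  have hf : (fun x => (gaussianPDFReal 0 v x).toNNReal • g x) = fun x => gaussianPDFReal 0 v x * g x := by
    funext x; rw [NNReal.smul_def, smul_eq_mul, Real.coe_toNNReal _ (gaussianPDFReal_nonneg 0 v _)]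
  rw [hf]

/-- Integral against the exponential measure as a density integral. -/
lemma aux_exp_int_eq (r : ℝ) (hr : 0 < r) (g : ℝ → ℝ) :
    ∫ x, g x ∂(expMeasure r) = ∫ x, exponentialPDFReal r x * g x := by
  rw [expMeasure, gammaMeasure]
  have : gammaPDF 1 r = (fun x => ((Real.toNNReal (exponentialPDFReal r x) : ℝ≥0) : ℝ≥0∞)) := rfl
  rw [this, integral_withDensity_eq_integral_smul
    ((measurable_exponentialPDFReal r).real_toNNReal) g]
  congr 1; ext x
  rw [NNReal.smul_def, smul_eq_mul, Real.coe_toNNReal _ (exponentialPDFReal_nonneg hr x)]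

lemma aux_integral_exp_cos (a b : ℝ) (ha : 0 < a) :
    ∫ x in Ioi (0:ℝ), exp (-(a*x)) * cos (b*x) = a / (a^2+b^2) := by
  have hab : (0:ℝ) < a^2 + b^2 := by positivity
  set F : ℝ → ℝ := fun x => exp (-(a*x)) * (b * sin (b*x) - a * cos (b*x)) / (a^2+b^2) with hF
  have hder : ∀ x ∈ Ici (0:ℝ), HasDerivAt F (exp (-(a*x)) * cos (b*x)) x := by
    intro x _
    have h1 : HasDerivAt (fun y : ℝ => exp (-(a*y))) (exp (-(a*x)) * (-a)) x := by
      have : HasDerivAt (fun y : ℝ => -(a*y)) (-a) x := by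
        simpa using ((hasDerivAt_neg x).const_mul a)
      exact this.exp
    have hs : HasDerivAt (fun y : ℝ => sin (b*y)) (cos (b*x) * b) x := by
      have : HasDerivAt (fun y : ℝ => b*y) b x := by simpa using (hasDerivAt_id x).const_mul b
      exact this.sin
    have hc : HasDerivAt (fun y : ℝ => cos (b*y)) (-sin (b*x) * b) x := by
      have : HasDerivAt (fun y : ℝ => b*y) b x := by simpa using (hasDerivAt_id x).const_mul b
      exact this.cos
    have h2 : HasDerivAt (fun y : ℝ => b * sin (b*y) - a * cos (b*y))
        (b * (cos (b*x) * b) - a * (-sin (b*x) * b)) x := (hs.const_mul b).sub (hc.const_mul a)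
    have := (h1.mul h2).div_const (a^2+b^2)
    refine this.congr_deriv ?_
    rw [eq_comm, eq_div_iff hab.ne']
    ring
  have hint : IntegrableOn (fun x => exp (-(a*x)) * cos (b*x)) (Ioi (0:ℝ)) := by
    refine Integrable.mono' (exp_neg_integrableOn_Ioi 0 ha) ?_ ?_
    · exact ((measurable_exp.comp ((measurable_id.const_mul a).neg)).mul
        ((measurable_id.const_mul b).cos.comp measurable_id)).aestronglyMeasurable
    · filter_upwards with x
      rw [neg_mul, norm_mul, norm_of_nonneg (exp_pos _).le]
      calc rexp (-(a*x)) * ‖cos (b*x)‖ ≤ rexp (-(a*x)) * 1 := by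
            gcongr; rw [Real.norm_eq_abs]; exact abs_cos_le_one _
        _ = rexp (-(a*x)) := mul_one _
  have htend : Tendsto F atTop (𝓝 0) := by
    have h1 : Tendsto (fun x : ℝ => rexp (-(a*x)) * ((|b|+|a|)/(a^2+b^2))) atTop (𝓝 0) := by
      have : Tendsto (fun x : ℝ => -(a*x)) atTop atBot :=
        tendsto_neg_atTop_atBot.comp (Tendsto.const_mul_atTop ha tendsto_id)
      simpa using (Real.tendsto_exp_atBot.comp this).mul_const ((|b|+|a|)/(a^2+b^2))
    refine squeeze_zero_norm (fun x => ?_) h1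
    have hFx : ‖F x‖ = rexp (-(a*x)) * ‖b * sin (b*x) - a * cos (b*x)‖ / (a^2+b^2) := by
      rw [hF, norm_div, norm_mul, Real.norm_eq_abs (a^2+b^2), abs_of_pos hab,
        Real.norm_eq_abs (rexp _), abs_of_pos (exp_pos _)]
    rw [hFx, ← mul_div_assoc]
    gcongr
    calc ‖b * sin (b*x) - a * cos (b*x)‖ ≤ ‖b * sin (b*x)‖ + ‖a * cos (b*x)‖ := norm_sub_le _ _
      _ ≤ |b| * 1 + |a| * 1 := by
          rw [norm_mul, norm_mul]
          gcongr <;> simp [abs_sin_le_one, abs_cos_le_one]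
      _ = |b| + |a| := by ring
  have key := integral_Ioi_of_hasDerivAt_of_tendsto' hder hint htend
  rw [key, hF]
  simp
  field_simp

lemma aux_exp_cos_int (σ lam : ℝ) (hσ : 0 < σ) (hlam : 0 < lam) :
    ∫ x, Real.cos (x / σ) ∂(expMeasure lam⁻¹) = σ^2 / (σ^2 + lam^2) := by
  have hr : (0:ℝ) < lam⁻¹ := by positivity
  rw [aux_exp_int_eq _ hr]
  have hfun : (fun x => exponentialPDFReal lam⁻¹ x * Real.cos (x/σ))
      = Set.indicator (Ici 0) (fun x => lam⁻¹ * (exp (-(lam⁻¹*x)) * Real.cos (σ⁻¹*x))) := by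
    funext x
    rw [Set.indicator_apply]
    simp only [mem_Ici]
    simp only [exponentialPDFReal, gammaPDFReal]
    split_ifs with h
    · rw [Real.rpow_one, Real.Gamma_one, sub_self, Real.rpow_zero,
        show x/σ = σ⁻¹*x by rw [div_eq_inv_mul]]
      ring
    · exact zero_mul _
  rw [hfun, integral_indicator measurableSet_Ici, integral_Ici_eq_integral_Ioi,
    integral_const_mul, aux_integral_exp_cos _ _ hr]
  field_simp

lemma aux_integrable_sq_exp (b : ℝ) (hb : 0 < b) :
    Integrable (fun x : ℝ => x^2 * exp (-b * x^2)) := by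
  refine Integrable.mono' ((integrable_exp_neg_mul_sq (show (0:ℝ) < b/2 by linarith)).const_mul
    (2/b)) ?_ ?_
  · exact ((measurable_id.pow_const 2).mul
      (measurable_exp.comp ((measurable_id.pow_const 2).const_mul (-b)))).aestronglyMeasurable
  · filter_upwards with x
    rw [Real.norm_eq_abs, abs_of_nonneg (by positivity)]
    have h1 : (b/2) * x^2 ≤ exp ((b/2) * x^2) := (Real.add_one_le_exp _).trans' (by linarith)
    have h2 : x^2 ≤ (2/b) * exp ((b/2) * x^2) := by
      have hbb : (0:ℝ) < b/2 := by linarith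
      calc x^2 = ((b/2) * x^2) / (b/2) := by field_simp
        _ ≤ exp ((b/2)*x^2) / (b/2) := by gcongr
        _ = (2/b) * exp ((b/2)*x^2) := by field_simp
    calc x^2 * exp (-b*x^2) ≤ ((2/b) * exp ((b/2)*x^2)) * exp (-b*x^2) := by
          gcongr
      _ = (2/b) * exp (-(b/2) * x^2) := by rw [mul_assoc, ← Real.exp_add]; ring_nf

lemma aux_integral_sq_exp_Ioi (b : ℝ) (hb : 0 < b) :
    ∫ x in Ioi (0:ℝ), x^2 * exp (-b * x^2) = b ^ (-(3:ℝ)/2) * (1/2) * ((1/2) * √π) := by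
  have h := integral_rpow_mul_exp_neg_mul_rpow (p := 2) (q := 2) (b := b)
    (by norm_num) (by norm_num) hb
  have heq : ∀ x ∈ Ioi (0:ℝ), x ^ (2:ℝ) * exp (-b * x ^ (2:ℝ)) = x^2 * exp (-b * x^2) := by
    intro x hx
    rw [show (2:ℝ) = ((2:ℕ):ℝ) by norm_num, Real.rpow_natCast]
  rw [setIntegral_congr_fun measurableSet_Ioi heq] at h
  rw [h, show (-(2+1)/2 : ℝ) = -(3:ℝ)/2 by norm_num, show ((2+1)/2:ℝ) = 1/2 + 1 by norm_num,
    Real.Gamma_add_one (by norm_num), Real.Gamma_one_half_eq]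

lemma aux_integral_sq_exp_real (b : ℝ) (hb : 0 < b) :
    ∫ x : ℝ, x^2 * exp (-b * x^2) = b ^ (-(3:ℝ)/2) * √π / 2 := by
  have hint := aux_integrable_sq_exp b hb
  have hsplit := intervalIntegral.integral_Iic_add_Ioi (b := (0:ℝ))
    hint.integrableOn hint.integrableOn
  have heven : ∫ x in Iic (0:ℝ), x^2 * exp (-b * x^2)
      = ∫ x in Ioi (0:ℝ), x^2 * exp (-b * x^2) := by
    have h0 := integral_comp_neg_Ioi (c := 0) (fun x => x^2 * exp (-b * x^2))
    simp only [neg_zero, neg_sq] at h0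
    exact h0.symm
  rw [← hsplit, heven, aux_integral_sq_exp_Ioi b hb]
  ring

lemma aux_gaussian_mean (v : ℝ≥0) (hv : v ≠ 0) : ∫ x, x ∂(gaussianReal 0 v) = 0 := by
  rw [aux_gaussian_int_eq v hv]
  have h := integral_neg_eq_self (fun x => gaussianPDFReal 0 v x * x) (volume : Measure ℝ)
  have heq : (fun x => gaussianPDFReal 0 v (-x) * (-x)) = fun x => -(gaussianPDFReal 0 v x * x) := by
    funext x
    simp only [gaussianPDFReal, neg_sq, zero_sub, sub_zero, neg_neg, mul_neg]
  rw [heq, integral_neg] at h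
  linarith

lemma aux_gaussian_sq (v : ℝ≥0) (hv : v ≠ 0) : ∫ x, x * x ∂(gaussianReal 0 v) = v := by
  have hV : (0:ℝ) < v := by positivity
  have h2V : (0:ℝ) < 2 * v := by linarith
  rw [aux_gaussian_int_eq v hv]
  have hfun : (fun x => gaussianPDFReal 0 v x * (x*x))
      = fun x => (√(2*π*(v:ℝ)))⁻¹ * (x^2 * exp (-(2*(v:ℝ))⁻¹ * x^2)) := by
    funext x
    rw [gaussianPDFReal, show -(x-0)^2/(2*(v:ℝ)) = -(2*(v:ℝ))⁻¹*x^2 by ring]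
    ring
  rw [hfun, integral_const_mul, aux_integral_sq_exp_real _ (by positivity)]
  have h1 : ((2*(v:ℝ))⁻¹ : ℝ) ^ (-(3:ℝ)/2) = (2*(v:ℝ)) ^ ((3:ℝ)/2) := by
    rw [show (-(3:ℝ)/2) = -((3:ℝ)/2) by norm_num, Real.inv_rpow h2V.le, Real.rpow_neg h2V.le,
      inv_inv]
  have h2 : (2*(v:ℝ)) ^ ((3:ℝ)/2) = (2*(v:ℝ)) * √(2*(v:ℝ)) := by
    rw [show (3:ℝ)/2 = 1 + 1/2 by norm_num, Real.rpow_add h2V, Real.rpow_one, ← Real.sqrt_eq_rpow]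
  have h3 : √(2*π*(v:ℝ)) = √π * √(2*(v:ℝ)) := by
    rw [show 2*π*(v:ℝ) = π*(2*(v:ℝ)) by ring, Real.sqrt_mul pi_pos.le]
  rw [h1, h2, h3]
  have hsp : (0:ℝ) < √π := sqrt_pos.mpr pi_pos
  have hs2 : (0:ℝ) < √(2*(v:ℝ)) := sqrt_pos.mpr h2V
  rw [div_eq_mul_inv, mul_inv]
  field_simp

/-- Integrability of `x`, `x*x` and `|x|` under a (nondegenerate) Gaussian. -/
lemma aux_gaussian_integrable_id (v : ℝ≥0) (hv : v ≠ 0) :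
    Integrable (fun x : ℝ => x) (gaussianReal 0 v) := by
  have hV : (0:ℝ) < v := by positivity
  have hb : (0:ℝ) < (2*(v:ℝ))⁻¹ := by positivity
  rw [aux_gaussian_integrable_iff v hv]
  refine Integrable.mono' (((integrable_mul_exp_neg_mul_sq hb).abs).const_mul
    ((√(2*π*(v:ℝ)))⁻¹)) ?_ ?_
  · exact ((measurable_gaussianPDFReal 0 v).mul measurable_id).aestronglyMeasurable
  · filter_upwards with x
    rw [Real.norm_eq_abs, abs_mul, gaussianPDFReal,
      show -(x-0)^2/(2*(v:ℝ)) = -((2*(v:ℝ))⁻¹ * x^2) by ring]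
    have : |(√(2*π*(v:ℝ)))⁻¹ * rexp (-((2*(v:ℝ))⁻¹ * x^2))|
        = (√(2*π*(v:ℝ)))⁻¹ * rexp (-((2*(v:ℝ))⁻¹ * x^2)) := by
      rw [abs_of_nonneg]; positivity
    rw [this, mul_assoc]
    gcongr
    rw [abs_mul, abs_of_nonneg (exp_pos _).le, mul_comm]
    gcongr
    rw [neg_mul]

lemma aux_gaussian_integrable_sq (v : ℝ≥0) (hv : v ≠ 0) :
    Integrable (fun x : ℝ => x * x) (gaussianReal 0 v) := by
  have hV : (0:ℝ) < v := by positivity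
  have hb : (0:ℝ) < (2*(v:ℝ))⁻¹ := by positivity
  rw [aux_gaussian_integrable_iff v hv]
  have hfun : (fun x => gaussianPDFReal 0 v x * (x*x))
      = fun x => (√(2*π*(v:ℝ)))⁻¹ * (x^2 * exp (-(2*(v:ℝ))⁻¹ * x^2)) := by
    funext x
    rw [gaussianPDFReal, show -(x-0)^2/(2*(v:ℝ)) = -(2*(v:ℝ))⁻¹*x^2 by ring]
    ring
  rw [hfun]
  exact (aux_integrable_sq_exp _ hb).const_mul _

lemma aux_gaussian_integrable_abs (v : ℝ≥0) (hv : v ≠ 0) :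
    Integrable (fun x : ℝ => |x|) (gaussianReal 0 v) :=
  (aux_gaussian_integrable_id v hv).abs



lemma aux_pi_cos_integral (σ lam : ℝ) (hσ : 0 < σ) (hlam : 0 < lam) (j : ℕ) :
    ∫ t : Fin j → ℝ, ∏ i, Real.cos (t i / σ)
        ∂(Measure.pi fun _ : Fin j => ProbabilityTheory.expMeasure lam⁻¹)
      = (σ^2 / (σ^2 + lam^2)) ^ j := by
  haveI hP : IsProbabilityMeasure (ProbabilityTheory.expMeasure lam⁻¹) :=
    ProbabilityTheory.isProbabilityMeasure_expMeasure (by positivity)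
  letI : MeasureSpace ℝ := ⟨ProbabilityTheory.expMeasure lam⁻¹⟩
  haveI : IsProbabilityMeasure (volume : Measure ℝ) := hP
  haveI : SigmaFinite (volume : Measure ℝ) := by infer_instance
  have h := MeasureTheory.integral_fintype_prod_eq_pow (𝕜 := ℝ) (ι := Fin j)
    (fun x => Real.cos (x/σ)) (μ := ProbabilityTheory.expMeasure lam⁻¹)
  rw [Fintype.card_fin] at h
  have hvol : (Measure.pi fun _ : Fin j => ProbabilityTheory.expMeasure lam⁻¹)
      = (volume : Measure (Fin j → ℝ)) := rfl
  rw [h,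
    aux_exp_cos_int σ lam hσ hlam]

lemma aux_coord_abs_integrable (j : ℕ) (k : Fin j) :
    Integrable (fun ξ : Fin j → ℝ => |ξ k|)
      (Measure.pi fun _ : Fin j => gaussianReal 0 1) := by
  letI : MeasureSpace ℝ := ⟨gaussianReal 0 1⟩
  haveI : IsProbabilityMeasure (volume : Measure ℝ) :=
    (inferInstance : IsProbabilityMeasure (gaussianReal 0 1))
  haveI : SigmaFinite (volume : Measure ℝ) := by infer_instance
  have h : ∀ i : Fin j, Integrable ((fun (i : Fin j) (x:ℝ) => if i = k then |x| else 1) i)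
      (volume : Measure ℝ) := by
    intro i
    by_cases hik : i = k
    · subst hik
      simp only [if_pos rfl]
      exact aux_gaussian_integrable_abs 1 one_ne_zero
    · simp only [if_neg hik]
      exact integrable_const 1
  have h2 := MeasureTheory.Integrable.fintype_prod (𝕜 := ℝ) h
  have heq : (fun ξ : Fin j → ℝ => ∏ i, (fun (i : Fin j) (x:ℝ) => if i = k then |x| else 1) i (ξ i))
      = fun ξ => |ξ k| := by
    funext ξ
    rw [Finset.prod_eq_single k (fun b _ hb => if_neg hb)
      (fun hk => absurd (Finset.mem_univ k) hk), if_pos rfl]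
  rw [heq] at h2
  exact h2

end Aux

/-- The RHMC chain for the univariate Gaussian target of standard deviation `σ`:
`q_{n+1} = cos(δt_n/σ) q_n + σ sin(δt_n/σ) ξ_n`, as a function of the durations
`t : Fin j → ℝ`, the Gaussian innovations `ξ : Fin j → ℝ`, and the initial state `q₀`. -/
noncomputable def rhmcChain (σ : ℝ) : (j : ℕ) → (Fin j → ℝ) → (Fin j → ℝ) → ℝ → ℝ
  | 0, _, _, q0 => q0
  | n + 1, t, ξ, q0 =>
      Real.cos (t (Fin.last n) / σ) *
          rhmcChain σ n (fun i => t i.castSucc) (fun i => ξ i.castSucc) q0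
        + σ * Real.sin (t (Fin.last n) / σ) * ξ (Fin.last n)

/-- The noise part of the chain. -/
noncomputable def rhmcNoise (σ : ℝ) : (j : ℕ) → (Fin j → ℝ) → (Fin j → ℝ) → ℝ
  | 0, _, _ => 0
  | n + 1, t, ξ =>
      Real.cos (t (Fin.last n) / σ) *
          rhmcNoise σ n (fun i => t i.castSucc) (fun i => ξ i.castSucc)
        + σ * Real.sin (t (Fin.last n) / σ) * ξ (Fin.last n)

lemma rhmc_decomp (σ : ℝ) : ∀ (j : ℕ) (t ξ : Fin j → ℝ) (q0 : ℝ),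
    rhmcChain σ j t ξ q0 = (∏ i, Real.cos (t i / σ)) * q0 + rhmcNoise σ j t ξ := by
  intro j
  induction j with
  | zero => intro t ξ q0; simp [rhmcChain, rhmcNoise]
  | succ n ih =>
      intro t ξ q0
      rw [rhmcChain, rhmcNoise, ih, Fin.prod_univ_castSucc]
      ring

lemma rhmcNoise_abs_le (σ : ℝ) : ∀ (j : ℕ) (t ξ : Fin j → ℝ),
    |rhmcNoise σ j t ξ| ≤ |σ| * ∑ i, |ξ i| := by
  intro j
  induction j with
  | zero => intro t ξ; simp [rhmcNoise]
  | succ n ih =>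
      intro t ξ
      rw [rhmcNoise, Fin.sum_univ_castSucc]
      have h1 := ih (fun i => t i.castSucc) (fun i => ξ i.castSucc)
      have hc : |Real.cos (t (Fin.last n) / σ)| ≤ 1 := abs_cos_le_one _
      have hs : |Real.sin (t (Fin.last n) / σ)| ≤ 1 := abs_sin_le_one _
      calc |Real.cos (t (Fin.last n) / σ) *
              rhmcNoise σ n (fun i => t i.castSucc) (fun i => ξ i.castSucc)
            + σ * Real.sin (t (Fin.last n) / σ) * ξ (Fin.last n)|
          ≤ |Real.cos (t (Fin.last n) / σ)| *
              |rhmcNoise σ n (fun i => t i.castSucc) (fun i => ξ i.castSucc)|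
            + |σ| * |Real.sin (t (Fin.last n) / σ)| * |ξ (Fin.last n)| := by
            refine (abs_add_le _ _).trans ?_
            rw [abs_mul, abs_mul, abs_mul]
        _ ≤ 1 * (|σ| * ∑ i : Fin n, |ξ i.castSucc|) + |σ| * 1 * |ξ (Fin.last n)| := by
            refine add_le_add (mul_le_mul hc h1 (abs_nonneg _) (by norm_num)) ?_
            gcongr
        _ = |σ| * ((∑ i : Fin n, |ξ i.castSucc|) + |ξ (Fin.last n)|) := by ring

lemma rhmcNoise_measurable (σ : ℝ) : ∀ (j : ℕ),
    Measurable (fun w : (Fin j → ℝ) × (Fin j → ℝ) => rhmcNoise σ j w.1 w.2) := by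
  intro j
  induction j with
  | zero =>
      have : (fun w : (Fin 0 → ℝ) × (Fin 0 → ℝ) => rhmcNoise σ 0 w.1 w.2) = fun _ => 0 := rfl
      rw [this]; exact measurable_const
  | succ n ih =>
      have hmap : Measurable (fun w : (Fin (n+1) → ℝ) × (Fin (n+1) → ℝ) =>
          ((fun i => w.1 i.castSucc, fun i => w.2 i.castSucc) : (Fin n → ℝ) × (Fin n → ℝ))) := by
        refine Measurable.prodMk ?_ ?_
        · exact measurable_pi_lambda _ fun i => (measurable_pi_apply _).comp measurable_fst
        · exact measurable_pi_lambda _ fun i => (measurable_pi_apply _).comp measurable_snd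
      have h1 : Measurable (fun w : (Fin (n+1) → ℝ) × (Fin (n+1) → ℝ) =>
          Real.cos (w.1 (Fin.last n) / σ)) :=
        (((measurable_pi_apply _).comp measurable_fst : Measurable fun w : (Fin (n+1) → ℝ) × (Fin (n+1) → ℝ) =>
          w.1 (Fin.last n)).div_const σ).cos
      have h2 : Measurable (fun w : (Fin (n+1) → ℝ) × (Fin (n+1) → ℝ) =>
          Real.sin (w.1 (Fin.last n) / σ)) :=
        (((measurable_pi_apply _).comp measurable_fst : Measurable fun w : (Fin (n+1) → ℝ) × (Fin (n+1) → ℝ) =>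
          w.1 (Fin.last n)).div_const σ).sin
      have h3 : Measurable (fun w : (Fin (n+1) → ℝ) × (Fin (n+1) → ℝ) => w.2 (Fin.last n)) :=
        (measurable_pi_apply _).comp measurable_snd
      exact ((h1.mul (ih.comp hmap)).add (((measurable_const.mul h2)).mul h3))

/-- For the stationary univariate RHMC chain with `q₀ ~ N(0,σ²)`, `δt_k` i.i.d. exponential with
mean `λ` (rate `λ⁻¹`), and `ξ_k` i.i.d. `N(0,1)`, all independent,
`Cov(q₀, q_j) = σ² (σ²/(σ² + λ²))^j`. -/
theorem rhmc_autocovariance (σ lam : ℝ) (hσ : 0 < σ) (hlam : 0 < lam) (j : ℕ) :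
    (∫ z : ℝ × ((Fin j → ℝ) × (Fin j → ℝ)),
        z.1 * rhmcChain σ j z.2.1 z.2.2 z.1
        ∂((gaussianReal 0 (Real.toNNReal (σ ^ 2))).prod
            ((Measure.pi fun _ : Fin j => ProbabilityTheory.expMeasure lam⁻¹).prod
              (Measure.pi fun _ : Fin j => gaussianReal 0 1))))
      - (∫ z : ℝ × ((Fin j → ℝ) × (Fin j → ℝ)), z.1
          ∂((gaussianReal 0 (Real.toNNReal (σ ^ 2))).prod
              ((Measure.pi fun _ : Fin j => ProbabilityTheory.expMeasure lam⁻¹).prod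
                (Measure.pi fun _ : Fin j => gaussianReal 0 1))))
        * (∫ z : ℝ × ((Fin j → ℝ) × (Fin j → ℝ)),
            rhmcChain σ j z.2.1 z.2.2 z.1
            ∂((gaussianReal 0 (Real.toNNReal (σ ^ 2))).prod
                ((Measure.pi fun _ : Fin j => ProbabilityTheory.expMeasure lam⁻¹).prod
                  (Measure.pi fun _ : Fin j => gaussianReal 0 1))))
      = σ ^ 2 * (σ ^ 2 / (σ ^ 2 + lam ^ 2)) ^ j := by
  have hσ2 : (0:ℝ) < σ^2 := by positivity
  set v : ℝ≥0 := Real.toNNReal (σ^2) with hvdef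
  have hv : v ≠ 0 := by
    simp only [hvdef, ne_eq, Real.toNNReal_eq_zero, not_le]
    exact hσ2
  have hvcoe : ((v:ℝ)) = σ^2 := Real.coe_toNNReal _ hσ2.le
  haveI : IsProbabilityMeasure (ProbabilityTheory.expMeasure lam⁻¹) :=
    ProbabilityTheory.isProbabilityMeasure_expMeasure (by positivity)
  set μE := Measure.pi fun _ : Fin j => ProbabilityTheory.expMeasure lam⁻¹ with hμE
  set μG := Measure.pi fun _ : Fin j => gaussianReal 0 1 with hμG
  set G0 := gaussianReal 0 v with hG0
  haveI : IsProbabilityMeasure μE := by rw [hμE]; infer_instance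
  haveI : IsProbabilityMeasure μG := by rw [hμG]; infer_instance
  haveI : IsProbabilityMeasure G0 := by rw [hG0]; infer_instance
  have hmean0 : ∫ x, x ∂G0 = 0 := aux_gaussian_mean v hv
  have hmean : (∫ z : ℝ × ((Fin j → ℝ) × (Fin j → ℝ)), z.1 ∂(G0.prod (μE.prod μG))) = 0 := by
    have h := integral_prod_mul (μ := G0) (ν := μE.prod μG) (fun x : ℝ => x) (fun _ => (1:ℝ))
    simp only [mul_one] at h
    rw [h, hmean0, zero_mul]
  rw [hmean, zero_mul, sub_zero]
  have hdec : (fun z : ℝ × ((Fin j → ℝ) × (Fin j → ℝ)) => z.1 * rhmcChain σ j z.2.1 z.2.2 z.1)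
      = fun z => (fun x : ℝ => x * x) z.1
            * (fun w : (Fin j → ℝ) × (Fin j → ℝ) => ∏ i, Real.cos (w.1 i / σ)) z.2
          + (fun x : ℝ => x) z.1
            * (fun w : (Fin j → ℝ) × (Fin j → ℝ) => rhmcNoise σ j w.1 w.2) z.2 := by
    funext z
    rw [rhmc_decomp]
    ring
  rw [hdec]
  have hC_meas : Measurable (fun w : (Fin j → ℝ) × (Fin j → ℝ) =>
      ∏ i, Real.cos (w.1 i / σ)) :=
    Finset.measurable_prod _ fun i _ =>
      (((measurable_pi_apply i).comp measurable_fst : Measurable fun w : (Fin j → ℝ) × (Fin j → ℝ) =>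
        w.1 i).div_const σ).cos
  have hC_int : Integrable (fun w : (Fin j → ℝ) × (Fin j → ℝ) => ∏ i, Real.cos (w.1 i / σ))
      (μE.prod μG) := by
    refine Integrable.mono' (integrable_const 1) hC_meas.aestronglyMeasurable ?_
    filter_upwards with w
    rw [Real.norm_eq_abs, Finset.abs_prod]
    exact Finset.prod_le_one (fun i _ => abs_nonneg _) (fun i _ => abs_cos_le_one _)
  have hS_int : Integrable (fun w : (Fin j → ℝ) × (Fin j → ℝ) => rhmcNoise σ j w.1 w.2)
      (μE.prod μG) := by
    have hbound : Integrable (fun w : (Fin j → ℝ) × (Fin j → ℝ) => |σ| * ∑ k, |w.2 k|)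
        (μE.prod μG) := by
      refine Integrable.const_mul ?_ _
      refine integrable_finset_sum _ (fun k _ => ?_)
      have h1 := (integrable_const (1:ℝ) (μ := μE)).mul_prod (aux_coord_abs_integrable j k)
      simpa using h1
    refine Integrable.mono' hbound (rhmcNoise_measurable σ j).aestronglyMeasurable ?_
    filter_upwards with w
    rw [Real.norm_eq_abs]
    exact rhmcNoise_abs_le σ j w.1 w.2
  have h1 : Integrable (fun z : ℝ × ((Fin j → ℝ) × (Fin j → ℝ)) =>
      (fun x : ℝ => x*x) z.1
        * (fun w : (Fin j → ℝ) × (Fin j → ℝ) => ∏ i, Real.cos (w.1 i / σ)) z.2)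
      (G0.prod (μE.prod μG)) :=
    (aux_gaussian_integrable_sq v hv).mul_prod hC_int
  have h2 : Integrable (fun z : ℝ × ((Fin j → ℝ) × (Fin j → ℝ)) =>
      (fun x:ℝ => x) z.1
        * (fun w : (Fin j → ℝ) × (Fin j → ℝ) => rhmcNoise σ j w.1 w.2) z.2)
      (G0.prod (μE.prod μG)) :=
    (aux_gaussian_integrable_id v hv).mul_prod hS_int
  rw [integral_add h1 h2,
    integral_prod_mul (μ := G0) (ν := μE.prod μG) (fun x : ℝ => x*x)
      (fun w : (Fin j → ℝ) × (Fin j → ℝ) => ∏ i, Real.cos (w.1 i / σ)),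
    integral_prod_mul (μ := G0) (ν := μE.prod μG) (fun x : ℝ => x)
      (fun w : (Fin j → ℝ) × (Fin j → ℝ) => rhmcNoise σ j w.1 w.2),
    hmean0, zero_mul, add_zero]
  have hCval : ∫ w : (Fin j → ℝ) × (Fin j → ℝ), ∏ i, Real.cos (w.1 i / σ) ∂(μE.prod μG)
      = (σ^2/(σ^2+lam^2))^j := by
    have h := integral_prod_mul (μ := μE) (ν := μG)
      (fun t : Fin j → ℝ => ∏ i, Real.cos (t i / σ)) (fun _ => (1:ℝ))
    simp only [mul_one] at h
    rw [h]
    have hone : ∫ (_ : Fin j → ℝ), (1:ℝ) ∂μG = 1 := by simp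
    rw [hone, mul_one, hμE]
    exact aux_pi_cos_integral σ lam hσ hlam j
  rw [hCval, aux_gaussian_sq v hv, hvcoe]
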